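/- Fix real numbers θ > 0, P̄ > 0, ν > 0 and N0 > 0, and set β = ⌊1/θ⌋ and α = 1/θ − β. Define, for λ > 0, C̄(λ) = (2θ/λ) · [ α·log( 1 + (β+1)·λ·P̄·ν/(2N0) ) + (1−α)·log( 1 + β·λ·P̄·ν/(2N0) ) ]. Then lim_{λ→0⁺} C̄(λ) = P̄·ν/N0. -/

import Mathlib

open Real Filter

lemma log_slope_tendsto (c : ℝ) :
    Tendsto (fun x : ℝ => Real.log (1 + c * x) / x) (nhdsWithin 0 (Set.Ioi 0)) (nhds c) := by
  have h1 : HasDerivAt (fun x : ℝ => Real.log (1 + c * x)) c 0 := by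
    have hinner : HasDerivAt (fun x : ℝ => 1 + c * x) c 0 := by
      simpa using (hasDerivAt_id (0:ℝ)).const_mul c |>.const_add 1
    have := (Real.hasDerivAt_log (by norm_num : (1:ℝ) + c * 0 ≠ 0)).comp 0 hinner
    simpa [Function.comp_def] using this
  have h2 := hasDerivAt_iff_tendsto_slope.mp h1
  have h3 : Tendsto (slope (fun x : ℝ => Real.log (1 + c * x)) 0)
      (nhdsWithin 0 (Set.Ioi 0)) (nhds c) :=
    h2.mono_left (nhdsWithin_mono _ (fun x hx => ne_of_gt hx))
  refine h3.congr' ?_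
  filter_upwards [self_mem_nhdsWithin] with x hx
  simp [slope_def_field, div_eq_mul_inv]

theorem normalized_capacity_limit_1D (θ Pbar ν N0 : ℝ)
    (hθ : 0 < θ) (hP : 0 < Pbar) (hν : 0 < ν) (hN0 : 0 < N0) :
    Tendsto (fun lam : ℝ =>
        (2 * θ / lam) *
          ((1 / θ - (⌊1 / θ⌋ : ℝ)) *
              Real.log (1 + ((⌊1 / θ⌋ : ℝ) + 1) * lam * Pbar * ν / (2 * N0))
            + (1 - (1 / θ - (⌊1 / θ⌋ : ℝ))) *
              Real.log (1 + (⌊1 / θ⌋ : ℝ) * lam * Pbar * ν / (2 * N0))))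
      (nhdsWithin 0 (Set.Ioi 0)) (nhds (Pbar * ν / N0)) := by
  set β : ℝ := (⌊1 / θ⌋ : ℝ)
  set α : ℝ := 1 / θ - β with hα
  set c1 : ℝ := (β + 1) * Pbar * ν / (2 * N0) with hc1
  set c2 : ℝ := β * Pbar * ν / (2 * N0) with hc2
  have h1 := log_slope_tendsto c1
  have h2 := log_slope_tendsto c2
  have hlim : Tendsto (fun lam : ℝ =>
      2 * θ * (α * (Real.log (1 + c1 * lam) / lam) + (1 - α) * (Real.log (1 + c2 * lam) / lam)))
      (nhdsWithin 0 (Set.Ioi 0)) (nhds (2 * θ * (α * c1 + (1 - α) * c2))) :=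
    (((h1.const_mul α).add (h2.const_mul (1 - α))).const_mul (2 * θ))
  have hval : 2 * θ * (α * c1 + (1 - α) * c2) = Pbar * ν / N0 := by
    have : α * c1 + (1 - α) * c2 = (α + β) * (Pbar * ν) / (2 * N0) := by
      rw [hc1, hc2]; field_simp; ring
    rw [this, hα]
    field_simp
    ring
  rw [← hval]
  refine hlim.congr' ?_
  filter_upwards [self_mem_nhdsWithin] with lam hlam
  have hne : lam ≠ 0 := ne_of_gt hlam
  have e1 : (β + 1) * lam * Pbar * ν / (2 * N0) = c1 * lam := by rw [hc1]; ring
  have e2 : β * lam * Pbar * ν / (2 * N0) = c2 * lam := by rw [hc2]; ring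
  rw [e1, e2]
  field_simp
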